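/- Let μ be a harmonic (stationary) measure for a random walk on a group G ≤ Homeo(K) generated by a finite set S with step distribution P of full support. If μ has an atom, then the action of G on K has a finite orbit, and hence an invariant probability measure. -/

import Mathlib

open MeasureTheory
open scoped ENNReal

/-- If a stationary (harmonic) measure for the random walk generated by a finite set
`S` with fully supported step distribution has an atom, then the generated group has
a finite orbit, hence an invariant probability measure. -/
theorem stmt7 {G K : Type*} [Group G] [MetricSpace K] [CompactSpace K]
    [MeasurableSpace K] [BorelSpace K] [MulAction G K]
    (hcont : ∀ g : G, Continuous fun x : K => g • x)
    (S : Finset G) (p : G → ENNReal)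
    (hp : ∀ s ∈ S, 0 < p s) (hsum : ∑ s ∈ S, p s = 1)
    (μ : Measure K) [IsProbabilityMeasure μ]
    (hstat : μ = ∑ s ∈ S, p s • Measure.map (fun x : K => s • x) μ)
    (hatom : ∃ x : K, 0 < μ {x}) :
    (∃ x : K, Set.Finite {y : K | ∃ g ∈ Subgroup.closure (S : Set G), g • x = y}) ∧
      ∃ ν : Measure K, IsProbabilityMeasure ν ∧
        ∀ g ∈ Subgroup.closure (S : Set G), Measure.map (fun x : K => g • x) ν = ν := by
  classical
  have hmeas : ∀ g : G, Measurable fun x : K => g • x := fun g => (hcont g).measurable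
  -- pointwise stationarity at singletons
  have key : ∀ x : K, μ {x} = ∑ s ∈ S, p s * μ {s⁻¹ • x} := by
    intro x
    conv_lhs => rw [hstat]
    rw [Measure.finset_sum_apply]
    refine Finset.sum_congr rfl fun s hs => ?_
    rw [Measure.smul_apply, smul_eq_mul,
      Measure.map_apply (hmeas s) (measurableSet_singleton x)]
    have hpre : (fun y : K => s • y) ⁻¹' {x} = {s⁻¹ • x} := by
      ext y
      simp [smul_eq_iff_eq_inv_smul]
    rw [hpre]
  -- the set of points with mass at least c is finite
  have hfin : ∀ c : ENNReal, 0 < c → {x : K | c ≤ μ {x}}.Finite := by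
    intro c hc
    by_contra hinf
    have hinf : Set.Infinite {x : K | c ≤ μ {x}} := hinf
    obtain ⟨n, hn⟩ := ENNReal.exists_nat_gt (ENNReal.div_lt_top ENNReal.one_ne_top hc.ne').ne
    obtain ⟨T, hTsub, hTcard⟩ := hinf.exists_subset_card_eq n
    have hμT : μ ↑T = ∑ x ∈ T, μ {x} := by
      rw [← Set.biUnion_of_singleton (↑T : Set K)]
      exact measure_biUnion_finset
        (fun a _ b _ hab => Set.disjoint_singleton.2 hab)
        (fun a _ => measurableSet_singleton a)
    have h1 : (n : ENNReal) * c ≤ 1 := by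
      calc (n : ENNReal) * c = ∑ _x ∈ T, c := by
            rw [Finset.sum_const, nsmul_eq_mul, hTcard]
        _ ≤ ∑ x ∈ T, μ {x} := Finset.sum_le_sum fun x hx => hTsub hx
        _ = μ ↑T := hμT.symm
        _ ≤ 1 := prob_le_one
    have : (n : ENNReal) ≤ 1 / c :=
      (ENNReal.le_div_iff_mul_le (Or.inl hc.ne') (Or.inr ENNReal.one_ne_top)).2 h1
    exact absurd this (not_le.2 hn)
  obtain ⟨x₀, hx₀⟩ := hatom
  set c := μ {x₀} with hc_def
  have hF₀fin : {x : K | c ≤ μ {x}}.Finite := hfin c hx₀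
  have hF₀ne : x₀ ∈ {x : K | c ≤ μ {x}} := le_refl c
  obtain ⟨xs, hxs, hmax⟩ := hF₀fin.exists_maximalFor (fun x => μ {x}) _ ⟨x₀, hF₀ne⟩
  set m := μ {xs} with hm_def
  have hm_pos : 0 < m := lt_of_lt_of_le hx₀ hxs
  have hm_le : ∀ y : K, μ {y} ≤ m := by
    intro y
    by_cases hy : c ≤ μ {y}
    · by_contra hlt
      exact hlt (hmax hy (not_le.1 hlt |>.le))
    · exact (not_le.1 hy).le.trans hxs
  have hm_ne_top : m ≠ ∞ := (lt_of_le_of_lt prob_le_one ENNReal.one_lt_top).ne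
  have hp_ne_top : ∀ s ∈ S, p s ≠ ∞ := by
    intro s hs
    have : p s ≤ 1 := hsum ▸ Finset.single_le_sum (f := p) (fun _ _ => zero_le) hs
    exact (lt_of_le_of_lt this ENNReal.one_lt_top).ne
  set A : Set K := {y : K | μ {y} = m} with hA_def
  have hxsA : xs ∈ A := rfl
  have hA_fin : A.Finite := (hfin m hm_pos).subset fun y hy => le_of_eq hy.symm
  -- invariance of A under s⁻¹
  have hA_inv : ∀ s ∈ S, Set.MapsTo (fun y : K => s⁻¹ • y) A A := by
    intro s hs x hx
    by_contra hne
    have hlt : μ {s⁻¹ • x} < m := lt_of_le_of_ne (hm_le _) hne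
    have hsum_m : ∑ t ∈ S, p t * m = m := by rw [← Finset.sum_mul, hsum, one_mul]
    have herane : ∑ t ∈ S.erase s, p t * m ≠ ∞ :=
      (ENNReal.sum_lt_top.2 fun t ht =>
        ENNReal.mul_lt_top (hp_ne_top t (Finset.mem_of_mem_erase ht)).lt_top hm_ne_top.lt_top).ne
    have hstrict : ∑ t ∈ S, p t * μ {t⁻¹ • x} < m := by
      calc ∑ t ∈ S, p t * μ {t⁻¹ • x}
          = p s * μ {s⁻¹ • x} + ∑ t ∈ S.erase s, p t * μ {t⁻¹ • x} :=
            (Finset.add_sum_erase S (fun t => p t * μ {t⁻¹ • x}) hs).symm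
        _ ≤ p s * μ {s⁻¹ • x} + ∑ t ∈ S.erase s, p t * m := by
            gcongr with t ht
            exact hm_le _
        _ < p s * m + ∑ t ∈ S.erase s, p t * m := by
            refine ENNReal.add_lt_add_right herane ?_
            exact (ENNReal.mul_lt_mul_iff_right (hp s hs).ne' (hp_ne_top s hs)).2 hlt
        _ = ∑ t ∈ S, p t * m := Finset.add_sum_erase S (fun t => p t * m) hs
        _ = m := hsum_m
    have hmm : m < m := by
      calc m = μ {x} := hx.symm
        _ = ∑ t ∈ S, p t * μ {t⁻¹ • x} := key x
        _ < m := hstrict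
    exact lt_irrefl m hmm
  -- an injective self-map of a finite set is invertible
  have hbij : ∀ g : G, Set.MapsTo (fun y : K => g • y) A A →
      Set.MapsTo (fun y : K => g⁻¹ • y) A A := by
    intro g hg
    have hinj : Set.InjOn (fun y : K => g • y) A := (MulAction.injective g).injOn
    have hb : Set.BijOn (fun y : K => g • y) A A :=
      (hA_fin.injOn_iff_bijOn_of_mapsTo hg).1 hinj
    intro x hx
    obtain ⟨y, hy, hxy⟩ := hb.surjOn hx
    have : g⁻¹ • x = y := by rw [← hxy]; exact inv_smul_smul g y
    show g⁻¹ • x ∈ A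
    rw [this]; exact hy
  -- the whole closure preserves A
  have hmain : ∀ g ∈ Subgroup.closure (S : Set G),
      Set.MapsTo (fun y : K => g • y) A A := by
    intro g hg
    induction hg using Subgroup.closure_induction with
    | mem s hs =>
        have := hbij s⁻¹ (hA_inv s hs)
        simpa using this
    | one => intro x hx; simpa using hx
    | mul a b _ _ ha hb =>
        intro x hx
        have := ha ((hb hx))
        simpa [mul_smul] using this
    | inv a _ ha => exact hbij a ha
  have hbijOn : ∀ g ∈ Subgroup.closure (S : Set G),
      Set.BijOn (fun y : K => g • y) A A := by
    intro g hg
    exact (hA_fin.injOn_iff_bijOn_of_mapsTo (hmain g hg)).1 (MulAction.injective g).injOn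
  constructor
  · refine ⟨xs, hA_fin.subset ?_⟩
    rintro y ⟨g, hg, rfl⟩
    exact hmain g hg hxsA
  · -- the uniform measure on A is invariant
    set F := hA_fin.toFinset with hF_def
    have hxsF : xs ∈ F := hA_fin.mem_toFinset.2 hxsA
    have hFcard : (F.card : ENNReal) ≠ 0 := by
      simp [Finset.card_ne_zero_of_mem hxsF]
    have hFcard_top : (F.card : ENNReal) ≠ ∞ := ENNReal.natCast_ne_top _
    set ν : Measure K := (F.card : ENNReal)⁻¹ • ∑ y ∈ F, Measure.dirac y with hν_def
    have hν_apply : ∀ B : Set K, MeasurableSet B →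
        ν B = (F.card : ENNReal)⁻¹ * ∑ y ∈ F, B.indicator 1 y := by
      intro B hB
      rw [hν_def, Measure.smul_apply, smul_eq_mul, Measure.finset_sum_apply]
      congr 1
      exact Finset.sum_congr rfl fun y _ => Measure.dirac_apply' y hB
    refine ⟨ν, ⟨?_⟩, ?_⟩
    · rw [hν_apply Set.univ MeasurableSet.univ]
      simp [Finset.sum_const, ENNReal.inv_mul_cancel hFcard hFcard_top]
    · intro g hg
      have hgbij := hbijOn g hg
      have hreindex : ∀ f : K → ENNReal, ∑ y ∈ F, f (g • y) = ∑ y ∈ F, f y := by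
        intro f
        refine Finset.sum_nbij' (fun y => g • y) (fun y => g⁻¹ • y) ?_ ?_ ?_ ?_ ?_
        · intro a ha
          exact hA_fin.mem_toFinset.2 (hgbij.mapsTo (hA_fin.mem_toFinset.1 ha))
        · intro a ha
          exact hA_fin.mem_toFinset.2 ((hbij g hgbij.mapsTo) (hA_fin.mem_toFinset.1 ha))
        · intro a _; exact inv_smul_smul g a
        · intro a _; exact smul_inv_smul g a
        · intro a _; rfl
      refine Measure.ext fun B hB => ?_
      rw [Measure.map_apply (hmeas g) hB,
        hν_apply _ (hmeas g hB), hν_apply B hB]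
      congr 1
      calc ∑ y ∈ F, ((fun x : K => g • x) ⁻¹' B).indicator 1 y
          = ∑ y ∈ F, B.indicator (1 : K → ENNReal) (g • y) := by
            refine Finset.sum_congr rfl fun y _ => ?_
            simp [Set.indicator]
        _ = ∑ y ∈ F, B.indicator 1 y := hreindex _
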